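/- arXiv:1611.06825 — 2 statements merged into one kernel-verified Lean document; each statement's English description precedes it below -/
import Mathlib

section
/- Let $w, w' \in \tilde W$ with $w \to w'$ (i.e. $w'$ is obtained from $w$ by a sequence of conjugations by simple reflections, each not increasing length). If moreover $\ell(w) = \ell(w')$, then also $w' \to w$; that is, $w \approx w'$. -/
/-- One step of the conjugation relation: `w →ˢ w'` iff `w' = s w s` for a simple
reflection `s ∈ S` with `ℓ w' ≤ ℓ w`. -/
def ConjStep {W : Type*} [Group W] (S : Set W) (ℓ : W → ℕ) (w w' : W) : Prop :=
  ∃ s ∈ S, w' = s * w * s ∧ ℓ w' ≤ ℓ w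

lemma conj_len_mono {W : Type*} [Group W] (S : Set W) (ℓ : W → ℕ) {w w' : W}
    (h : Relation.ReflTransGen (ConjStep S ℓ) w w') : ℓ w' ≤ ℓ w := by
  induction h with
  | refl => exact le_rfl
  | tail _ hstep ih => exact le_trans hstep.choose_spec.2.2 ih

/-- If `w → w'` (a chain of length-non-increasing conjugations by simple reflections)
and `ℓ w = ℓ w'`, then also `w' → w`; that is, `w ≈ w'`. -/
theorem to_reverse_of_length_eq
    {W : Type*} [Group W] (S : Set W) (hS : ∀ s ∈ S, s * s = 1) (ℓ : W → ℕ)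
    (w w' : W)
    (hto : Relation.ReflTransGen (ConjStep S ℓ) w w')
    (hlen : ℓ w = ℓ w') :
    Relation.ReflTransGen (ConjStep S ℓ) w' w := by
  induction hto with
  | refl => exact Relation.ReflTransGen.refl
  | @tail b c hwb hstep ih =>
    obtain ⟨s, hs, hc, hle⟩ := hstep
    have hb : ℓ b ≤ ℓ w := conj_len_mono S ℓ hwb
    have hcb : ℓ c = ℓ b := le_antisymm hle (by omega)
    have hwbEq : ℓ w = ℓ b := by omega
    have hrev : ConjStep S ℓ c b := by
      refine ⟨s, hs, ?_, hcb.ge⟩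
      have h1 : s * s = 1 := hS s hs
      rw [hc, show s * (s * b * s) * s = (s*s) * b * (s*s) by group, h1, one_mul, mul_one]
    exact Relation.ReflTransGen.head hrev (ih hwbEq)
end

section
/- Let $(x, K, u)$ be a standard triple in $\tilde W$ with $\mathrm{Ad}(x)(K) = K$ and $u \in W_K$. Then the element $ux$ has the same Newton point as $x$: $\nu_{ux} = \nu_x$, and hence $\bar\nu_{ux} = \bar\nu_x$. -/
/-- Let `(x, K, u)` be a standard triple in an extended affine Weyl group
(encoded by a translation embedding `t : Λ → W` of a torsion-free lattice and a
projection `p` onto a finite group `W0` with kernel the translations): `x` is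
straight, `W_K = ⟨K⟩` is finite, `x` has minimal length in `W_K x`,
`Ad(x)(K) = K` and `u ∈ W_K`.  Then `u x` has the same Newton point as `x`:
there are `l > 0` and `λ` with `x ^ l = t λ` and `(u x) ^ l = t λ`
(so `ν_{ux} = ν_x = λ / l`, and hence also `ν̄_{ux} = ν̄_x`). -/
theorem newton_point_of_ux_eq_newton_point_of_x
    {W : Type*} [Group W] {W0 : Type*} [Group W0] [Finite W0]
    {Λ : Type*} [AddCommGroup Λ]
    (t : Λ → W) (ht : ∀ a b : Λ, t (a + b) = t a * t b)
    (htinj : Function.Injective t)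
    (htor : ∀ (n : ℕ) (a : Λ), 0 < n → n • a = 0 → a = 0)
    (p : W →* W0) (hexact : ∀ w : W, p w = 1 ↔ ∃ lam : Λ, w = t lam)
    (ℓ : W → ℕ)
    (K : Set W) (hfin : (Subgroup.closure K : Set W).Finite)
    (x : W) (hstraight : ∀ n : ℕ, ℓ (x ^ n) = n * ℓ x)
    (hmin : ∀ v ∈ Subgroup.closure K, ℓ x ≤ ℓ (v * x))
    (hAd : (fun k => x * k * x⁻¹) '' K = K)
    (u : W) (hu : u ∈ Subgroup.closure K) :
    ∃ l : ℕ, 0 < l ∧ ∃ lam : Λ, x ^ l = t lam ∧ (u * x) ^ l = t lam := by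
  -- basic facts about t
  have ht0 : t 0 = 1 := by
    have h0 := ht 0 0
    rw [add_zero] at h0
    have h : t 0 * 1 = t 0 * t 0 := by rw [mul_one, ← h0]
    exact (mul_left_cancel h).symm
  have htpow : ∀ (n : ℕ) (a : Λ), t (n • a) = t a ^ n := by
    intro n a
    induction n with
    | zero => simpa using ht0
    | succ k ih => rw [succ_nsmul, ht, ih, pow_succ]
  -- conjugation by x preserves the closure of K
  have hconj : ∀ w ∈ Subgroup.closure K, x * w * x⁻¹ ∈ Subgroup.closure K := by
    intro w hw
    induction hw using Subgroup.closure_induction with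
    | mem k hk =>
      apply Subgroup.subset_closure
      rw [← hAd]
      exact ⟨k, hk, rfl⟩
    | one => simpa using Subgroup.one_mem _
    | mul a b _ _ ha hb =>
      have : x * (a * b) * x⁻¹ = (x * a * x⁻¹) * (x * b * x⁻¹) := by group
      rw [this]; exact Subgroup.mul_mem _ ha hb
    | inv a _ ha =>
      have : x * a⁻¹ * x⁻¹ = (x * a * x⁻¹)⁻¹ := by group
      rw [this]; exact Subgroup.inv_mem _ ha
  have hconjn : ∀ (n : ℕ), ∀ w ∈ Subgroup.closure K,
      x ^ n * w * (x ^ n)⁻¹ ∈ Subgroup.closure K := by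
    intro n
    induction n with
    | zero => intro w hw; simpa using hw
    | succ k ih =>
      intro w hw
      have h1 := hconj _ (ih w hw)
      have : x * (x ^ k * w * (x ^ k)⁻¹) * x⁻¹
          = x ^ (k + 1) * w * (x ^ (k + 1))⁻¹ := by
        rw [pow_succ']
        group
      rwa [this] at h1
  -- product formula
  have hprod : ∀ n : ℕ, ∃ v ∈ Subgroup.closure K, (u * x) ^ n = v * x ^ n := by
    intro n
    induction n with
    | zero => exact ⟨1, Subgroup.one_mem _, by simp⟩
    | succ k ih =>
      obtain ⟨v, hv, hvk⟩ := ih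
      refine ⟨v * (x ^ k * u * (x ^ k)⁻¹), Subgroup.mul_mem _ hv (hconjn k u hu), ?_⟩
      rw [pow_succ, hvk, pow_succ]
      group
  -- the exponent
  set l := Nat.card W0 with hldef
  have hlpos : 0 < l := Nat.card_pos
  have hx : ∃ lam : Λ, x ^ l = t lam := by
    rw [← hexact, map_pow, pow_card_eq_one']
  have hux : ∃ mu : Λ, (u * x) ^ l = t mu := by
    rw [← hexact, map_pow, pow_card_eq_one']
  obtain ⟨lam, hlam⟩ := hx
  obtain ⟨mu, hmu⟩ := hux
  obtain ⟨v, hv, hveq⟩ := hprod l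
  -- v = t (mu - lam)
  have hveq' : v = t (mu - lam) := by
    have h1 : t (mu - lam) * t lam = t mu := by rw [← ht]; congr 1; abel
    have h2 : v * t lam = t mu := by rw [← hlam, ← hveq, hmu]
    have := h1.trans h2.symm
    exact (mul_right_cancel this).symm
  -- v has finite order, so mu - lam is torsion, hence zero
  have : Finite (Subgroup.closure K) := hfin.to_subtype
  set m := Nat.card (Subgroup.closure K) with hmdef
  have hmpos : 0 < m := Nat.card_pos
  have hvm : v ^ m = 1 := by
    have : (⟨v, hv⟩ : Subgroup.closure K) ^ m = 1 := pow_card_eq_one'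
    have := congrArg (Subtype.val) this
    simpa using this
  have hzero : mu - lam = 0 := by
    apply htor m _ hmpos
    apply htinj
    rw [htpow, ← hveq', hvm, ht0]
  have hmulam : mu = lam := by
    have := sub_eq_zero.mp hzero
    exact this
  exact ⟨l, hlpos, lam, hlam, by rw [hmu, hmulam]⟩
end
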